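/- For the symmetric algebra A = S(V) with Koszul spaces W_p ⊆ V^{⊗p}, W_p equals the image of the antisymmetrization map Ant: V^{⊗p} → V^{⊗p}, Ant(v_1 ⊗ … ⊗ v_p) = Σ_{σ ∈ Σ_p} sgn(σ) v_{σ(1)} ⊗ … ⊗ v_{σ(p)}. -/

import Mathlib

/- STATEMENT 9: For the symmetric algebra `A = S(V) = T(V)/(R)`, where `R` is spanned by the
commutators `x⊗y − y⊗x`, the Koszul subspace `W_p ⊆ V^{⊗p}` equals the image of the
antisymmetrization map `Ant(v_1 ⊗ … ⊗ v_p) = Σ_{σ ∈ Σ_p} sgn(σ) v_{σ(1)} ⊗ … ⊗ v_{σ(p)}`. -/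

open TensorProduct PiTensorProduct


open TensorProduct PiTensorProduct

variable (k : Type*) [Field k] (V : Type*) [AddCommGroup V] [Module k V]

/-- The canonical equivalence `V^{⊗i} ⊗ V^{⊗j} ≃ V^{⊗(i+j)}`. -/
noncomputable def tpMul (i j : ℕ) : ((⨂[k]^i V) ⊗[k] (⨂[k]^j V)) ≃ₗ[k] ⨂[k]^(i + j) V :=
  (PiTensorProduct.tmulEquiv (ι := Fin i) (ι₂ := Fin j) k V).trans
    (PiTensorProduct.reindex k (fun _ => V) finSumFinEquiv)

variable {k V}

/-- The subspace `S ⊗ T` of `V^{⊗(i+j)}` attached to subspaces `S ⊆ V^{⊗i}`, `T ⊆ V^{⊗j}`. -/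
noncomputable def sprod {i j : ℕ} (S : Submodule k (⨂[k]^i V)) (T : Submodule k (⨂[k]^j V)) :
    Submodule k (⨂[k]^(i + j) V) :=
  Submodule.map (tpMul k V i j).toLinearMap (Submodule.map₂ (TensorProduct.mk k _ _) S T)

/-- Transport of subspaces of tensor powers along an equality of exponents. -/
noncomputable def scast {i j : ℕ} (h : i = j) (S : Submodule k (⨂[k]^i V)) :
    Submodule k (⨂[k]^j V) :=
  Submodule.map (PiTensorProduct.reindex k (fun _ => V) (finCongr h)).toLinearMap S

/-- The identification `V^{⊗1} ≃ V`. -/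
noncomputable def e1 : (⨂[k]^1 V) ≃ₗ[k] V := PiTensorProduct.subsingletonEquiv (0 : Fin 1)

/-- The identification `V^{⊗2} ≃ V ⊗ V`. -/
noncomputable def e2 : (⨂[k]^2 V) ≃ₗ[k] (V ⊗[k] V) :=
  (tpMul k V 1 1).symm.trans (TensorProduct.congr e1 e1)

/-- The Koszul subspaces `W p = ⋂_{i+2+j=p} V^{⊗i} ⊗ R ⊗ V^{⊗j}`; the intersection is empty
for `p = 0, 1`, so `W 0` and `W 1` are the whole ambient spaces (`k` resp. `V`). -/
noncomputable def W (R : Submodule k (V ⊗[k] V)) (p : ℕ) : Submodule k (⨂[k]^p V) :=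
  ⨅ (i : ℕ), ⨅ (j : ℕ), ⨅ (_ : i + 2 + j = p),
    scast (show i + (2 + j) = p by omega)
      (sprod (⊤ : Submodule k (⨂[k]^i V))
        (sprod (Submodule.map (e2 (k := k) (V := V)).symm.toLinearMap R)
          (⊤ : Submodule k (⨂[k]^j V))))


variable (k V)

/-- The antisymmetrization map `V^{⊗p} → V^{⊗p}`,
`v_1 ⊗ … ⊗ v_p ↦ Σ_{σ ∈ Σ_p} sgn(σ) v_{σ(1)} ⊗ … ⊗ v_{σ(p)}`. -/
noncomputable def Ant (p : ℕ) : (⨂[k]^p V) →ₗ[k] ⨂[k]^p V :=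
  ∑ σ : Equiv.Perm (Fin p),
    (((Equiv.Perm.sign σ : ℤ) : k) •
      (PiTensorProduct.reindex k (fun _ : Fin p => V) σ).toLinearMap)

/-- The relation subspace of the symmetric algebra: the span of the commutators. -/
noncomputable def Rsym : Submodule k (V ⊗[k] V) :=
  Submodule.span k {z | ∃ x y : V, z = x ⊗ₜ[k] y - y ⊗ₜ[k] x}
section Aux
open Equiv

variable {k : Type*} [Field k] {V : Type*} [AddCommGroup V] [Module k V]

lemma tpMul_tprod (m n : ℕ) (f : Fin m → V) (g : Fin n → V) :
    tpMul k V m n (tprod k f ⊗ₜ tprod k g) = tprod k (Fin.append f g) := by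
  rw [tpMul, LinearEquiv.trans_apply, PiTensorProduct.tmulEquiv_apply,
    PiTensorProduct.reindex_tprod]
  congr 1
  funext a
  refine Fin.addCases (fun a' => ?_) (fun a' => ?_) a <;>
    simp [Fin.append_left, Fin.append_right]

lemma e1_symm (x : V) : (e1 (k := k) (V := V)).symm x = tprod k (fun _ : Fin 1 => x) := by
  rw [LinearEquiv.symm_apply_eq, e1, PiTensorProduct.subsingletonEquiv_apply_tprod]

lemma e2_symm_tmul (x y : V) :
    (e2 (k := k) (V := V)).symm (x ⊗ₜ y) = tprod k ![x, y] := by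
  rw [LinearEquiv.symm_apply_eq, e2, LinearEquiv.trans_apply]
  have h : (tpMul k V 1 1).symm (tprod k ![x, y]) =
      tprod k (fun _ : Fin 1 => x) ⊗ₜ tprod k (fun _ : Fin 1 => y) := by
    rw [LinearEquiv.symm_apply_eq, tpMul_tprod]
    congr 1
    funext a
    fin_cases a <;> rfl
  rw [h, TensorProduct.congr_tmul, e1, PiTensorProduct.subsingletonEquiv_apply_tprod,
    PiTensorProduct.subsingletonEquiv_apply_tprod]

end Aux
section Cat
open Equiv

variable {k : Type*} [Field k] {V : Type*} [AddCommGroup V] [Module k V]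

variable {p i j : ℕ} (h : i + 2 + j = p)

/-- The concatenated family `u, x, y, v` as a function `Fin p → V`. -/
def catp (u : Fin i → V) (x y : V) (v : Fin j → V) : Fin p → V :=
  fun a => Fin.append u (Fin.append ![x, y] v) (Fin.cast (by omega : p = i + (2 + j)) a)

lemma catp_lt (u : Fin i → V) (x y : V) (v : Fin j → V) (a : Fin p) (ha : (a : ℕ) < i) :
    catp h u x y v a = u ⟨a, ha⟩ := by
  have : Fin.cast (by omega : p = i + (2 + j)) a = Fin.castAdd (2 + j) ⟨a, ha⟩ := by
    ext; rfl
  rw [catp, this, Fin.append_left]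

lemma catp_mid (u : Fin i → V) (x y : V) (v : Fin j → V) (a : Fin p)
    (ha : i ≤ (a : ℕ)) (ha2 : (a : ℕ) < i + 2) :
    catp h u x y v a = ![x, y] ⟨(a : ℕ) - i, by omega⟩ := by
  have h1 : Fin.cast (by omega : p = i + (2 + j)) a =
      Fin.natAdd i (Fin.castAdd j ⟨(a : ℕ) - i, by omega⟩) := by
    ext; simp; omega
  rw [catp, h1, Fin.append_right, Fin.append_left]

lemma catp_at_i (u : Fin i → V) (x y : V) (v : Fin j → V) (a : Fin p) (ha : (a : ℕ) = i) :
    catp h u x y v a = x := by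
  rw [catp_mid h u x y v a (by omega) (by omega)]
  have : (⟨(a : ℕ) - i, by omega⟩ : Fin 2) = 0 := by ext; simp; omega
  rw [this]; rfl

lemma catp_at_i1 (u : Fin i → V) (x y : V) (v : Fin j → V) (a : Fin p)
    (ha : (a : ℕ) = i + 1) :
    catp h u x y v a = y := by
  rw [catp_mid h u x y v a (by omega) (by omega)]
  have : (⟨(a : ℕ) - i, by omega⟩ : Fin 2) = 1 := by ext; simp; omega
  rw [this]; rfl

lemma catp_ge (u : Fin i → V) (x y : V) (v : Fin j → V) (a : Fin p)
    (ha : i + 2 ≤ (a : ℕ)) :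
    catp h u x y v a = v ⟨(a : ℕ) - (i + 2), by omega⟩ := by
  have h1 : Fin.cast (by omega : p = i + (2 + j)) a =
      Fin.natAdd i (Fin.natAdd 2 ⟨(a : ℕ) - (i + 2), by omega⟩) := by
    ext; simp; omega
  rw [catp, h1, Fin.append_right, Fin.append_right]

/-- The positions `i` and `i+1` in `Fin p`. -/
def pos0 : Fin p := ⟨i, by omega⟩
def pos1 : Fin p := ⟨i + 1, by omega⟩

lemma catp_eq_self (f : Fin p → V) :
    catp h (fun a => f ⟨a, by omega⟩) (f (pos0 h)) (f (pos1 h))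
      (fun a => f ⟨i + 2 + a, by omega⟩) = f := by
  funext a
  rcases Nat.lt_or_ge (a : ℕ) i with ha | ha
  · rw [catp_lt h _ _ _ _ a ha]
  · rcases Nat.lt_or_ge (a : ℕ) (i + 2) with ha2 | ha2
    · rcases Nat.lt_or_ge (a : ℕ) (i + 1) with ha1 | ha1
      · rw [catp_at_i h _ _ _ _ a (by omega)]
        congr 1; ext; simp [pos0]; omega
      · rw [catp_at_i1 h _ _ _ _ a (by omega)]
        congr 1; ext; simp [pos1]; omega
    · rw [catp_ge h _ _ _ _ a ha2]
      congr 1; ext; simp; omega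

lemma catp_swap (u : Fin i → V) (x y : V) (v : Fin j → V) :
    catp h u y x v = catp h u x y v ∘ (swap (pos0 h) (pos1 h)) := by
  have hne : (pos0 h : Fin p) ≠ pos1 h := by
    simp [pos0, pos1, Fin.ext_iff]
  funext a
  rcases Nat.lt_or_ge (a : ℕ) i with ha | ha
  · have h0 : a ≠ pos0 h := by simp [pos0, Fin.ext_iff]; omega
    have h1 : a ≠ pos1 h := by simp [pos1, Fin.ext_iff]; omega
    simp only [Function.comp_apply, swap_apply_of_ne_of_ne h0 h1]
    rw [catp_lt h _ _ _ _ a ha, catp_lt h _ _ _ _ a ha]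
  · rcases Nat.lt_or_ge (a : ℕ) (i + 2) with ha2 | ha2
    · rcases Nat.lt_or_ge (a : ℕ) (i + 1) with ha1 | ha1
      · have h0 : a = pos0 h := by ext; simp [pos0]; omega
        subst h0
        simp only [Function.comp_apply, swap_apply_left]
        rw [catp_at_i h u y x v _ rfl, catp_at_i1 h u x y v _ rfl]
      · have h0 : a = pos1 h := by ext; simp [pos1]; omega
        subst h0
        simp only [Function.comp_apply, swap_apply_right]
        rw [catp_at_i1 h u y x v _ rfl, catp_at_i h u x y v _ rfl]
    · have h0 : a ≠ pos0 h := by simp [pos0, Fin.ext_iff]; omega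
      have h1 : a ≠ pos1 h := by simp [pos1, Fin.ext_iff]; omega
      simp only [Function.comp_apply, swap_apply_of_ne_of_ne h0 h1]
      rw [catp_ge h _ _ _ _ a ha2, catp_ge h _ _ _ _ a ha2]

end Cat
section Usub
open Equiv

variable {k : Type*} [Field k] {V : Type*} [AddCommGroup V] [Module k V]

variable {p i j : ℕ}

/-- One factor of the Koszul intersection. -/
noncomputable def Usub (h : i + 2 + j = p) : Submodule k (⨂[k]^p V) :=
  scast (show i + (2 + j) = p by omega)
    (sprod (⊤ : Submodule k (⨂[k]^i V))
      (sprod (Submodule.map (e2 (k := k) (V := V)).symm.toLinearMap (Rsym k V))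
        (⊤ : Submodule k (⨂[k]^j V))))

lemma W_Rsym_eq (q : ℕ) :
    W (Rsym k V) q = ⨅ (i : ℕ), ⨅ (j : ℕ), ⨅ (h : i + 2 + j = q), Usub (k := k) (V := V) h :=
  rfl

lemma G_eq (h : i + 2 + j = p) (u : Fin i → V) (x y : V) (v : Fin j → V) :
    (PiTensorProduct.reindex k (fun _ => V) (finCongr (show i + (2 + j) = p by omega)))
      (tpMul k V i (2 + j) (tprod k u ⊗ₜ
        tpMul k V 2 j ((e2 (k := k) (V := V)).symm (x ⊗ₜ y) ⊗ₜ tprod k v)))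
    = tprod k (catp h u x y v) := by
  rw [e2_symm_tmul, tpMul_tprod, tpMul_tprod, PiTensorProduct.reindex_tprod]
  congr 1

lemma G_sub (h : i + 2 + j = p) (u : Fin i → V) (x y : V) (v : Fin j → V) :
    (PiTensorProduct.reindex k (fun _ => V) (finCongr (show i + (2 + j) = p by omega)))
      (tpMul k V i (2 + j) (tprod k u ⊗ₜ
        tpMul k V 2 j ((e2 (k := k) (V := V)).symm (x ⊗ₜ y - y ⊗ₜ x) ⊗ₜ tprod k v)))
    = tprod k (catp h u x y v) - tprod k (catp h u y x v) := by
  rw [map_sub, TensorProduct.sub_tmul, map_sub, TensorProduct.tmul_sub, map_sub, map_sub,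
    G_eq h, G_eq h]

lemma mem_Usub (h : i + 2 + j = p) (u : Fin i → V) (x y : V) (v : Fin j → V) :
    tprod k (catp h u x y v) - tprod k (catp h u y x v) ∈ Usub (k := k) h := by
  rw [← G_sub h]
  refine Submodule.mem_map_of_mem ?_
  rw [sprod]
  refine Submodule.mem_map_of_mem ?_
  refine Submodule.apply_mem_map₂ _ Submodule.mem_top ?_
  rw [sprod]
  refine Submodule.mem_map_of_mem ?_
  refine Submodule.apply_mem_map₂ _ ?_ Submodule.mem_top
  exact Submodule.mem_map_of_mem (Submodule.subset_span ⟨x, y, rfl⟩)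

lemma Usub_le (h : i + 2 + j = p) (K : Submodule k (⨂[k]^p V))
    (hK : ∀ (u : Fin i → V) (x y : V) (v : Fin j → V),
      tprod k (catp h u x y v) - tprod k (catp h u y x v) ∈ K) :
    Usub (k := k) (V := V) h ≤ K := by
  rw [Usub, scast, sprod, Submodule.map_le_iff_le_comap, Submodule.map_le_iff_le_comap]
  refine Submodule.map₂_le.2 fun s hs t ht => ?_
  clear hs
  induction s using PiTensorProduct.induction_on with
  | smul_tprod r u =>
    simp only [Submodule.mem_comap, LinearEquiv.coe_coe, TensorProduct.mk_apply]
    rw [← TensorProduct.smul_tmul', map_smul, map_smul]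
    refine Submodule.smul_mem _ _ ?_
    rw [sprod] at ht
    obtain ⟨t', ht', rfl⟩ := ht
    set F : (⨂[k]^(2 + j) V) →ₗ[k] ⨂[k]^p V :=
      (PiTensorProduct.reindex k (fun _ => V)
          (finCongr (show i + (2 + j) = p by omega))).toLinearMap
        ∘ₗ (tpMul k V i (2 + j)).toLinearMap
        ∘ₗ (TensorProduct.mk k _ _) (tprod k u) with hF
    have hle : Submodule.map₂ (TensorProduct.mk k _ _)
        (Submodule.map (e2 (k := k) (V := V)).symm.toLinearMap (Rsym k V))
        (⊤ : Submodule k (⨂[k]^j V)) ≤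
        Submodule.comap ((tpMul k V 2 j).toLinearMap) (Submodule.comap F K) := by
      refine Submodule.map₂_le.2 ?_
      rintro r' ⟨r, hr, rfl⟩ v hv
      clear hv
      induction v using PiTensorProduct.induction_on with
      | smul_tprod c v =>
        simp only [Submodule.mem_comap, TensorProduct.mk_apply, LinearEquiv.coe_coe, hF,
          LinearMap.coe_comp, Function.comp_apply]
        rw [TensorProduct.tmul_smul, map_smul, TensorProduct.tmul_smul, map_smul, map_smul]
        refine Submodule.smul_mem _ _ ?_
        induction hr using Submodule.span_induction with
        | mem z hz =>
          obtain ⟨x, y, rfl⟩ := hz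
          rw [G_sub (k := k) (V := V) h u x y v]
          exact hK u x y v
        | zero =>
          rw [show (e2 (k := k) (V := V)).symm 0 = 0 from map_zero _]
          simp only [TensorProduct.zero_tmul, map_zero, TensorProduct.tmul_zero]
          exact K.zero_mem
        | add a b _ _ ha hb =>
          rw [map_add, TensorProduct.add_tmul, map_add, TensorProduct.tmul_add, map_add, map_add]
          exact K.add_mem ha hb
        | smul c a _ ha =>
          rw [map_smul, ← TensorProduct.smul_tmul', map_smul, TensorProduct.tmul_smul, map_smul,
            map_smul]
          exact K.smul_mem c ha
      | add a b ha hb =>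
        simp only [Submodule.mem_comap, TensorProduct.mk_apply, LinearEquiv.coe_coe, hF,
          LinearMap.coe_comp, Function.comp_apply] at *
        rw [TensorProduct.tmul_add, map_add, TensorProduct.tmul_add, map_add, map_add]
        exact K.add_mem ha hb
    have := hle ht'
    simpa only [Submodule.mem_comap, TensorProduct.mk_apply, LinearEquiv.coe_coe, hF,
      LinearMap.coe_comp, Function.comp_apply] using this
  | add a b ha hb =>
    simp only [Submodule.mem_comap, LinearEquiv.coe_coe, TensorProduct.mk_apply] at *
    rw [TensorProduct.add_tmul, map_add, map_add]
    exact K.add_mem ha hb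

end Usub
section Module.Basis
open Equiv

variable {k : Type*} [Field k] {V : Type*} [AddCommGroup V] [Module k V]
variable {ι : Type*}

/-- The equivalence `(Fin p → ι) × ι ≃ (Fin (p+1) → ι)` by `snoc`. -/
def snocE (p : ℕ) : ((Fin p → ι) × ι) ≃ (Fin (p + 1) → ι) where
  toFun z := Fin.snoc z.1 z.2
  invFun g := (Fin.init g, g (Fin.last p))
  left_inv z := by simp
  right_inv g := by simp [Fin.snoc_init_self]

/-- A basis of the tensor power, built by induction. -/
noncomputable def tb (b : Module.Basis ι k V) : ∀ p : ℕ, Module.Basis (Fin p → ι) k (⨂[k]^p V)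
  | 0 => (Module.Basis.singleton (Fin 0 → ι) k).map (PiTensorProduct.isEmptyEquiv (Fin 0)).symm
  | (p + 1) =>
    (((tb b p).tensorProduct b).map
      ((TensorProduct.congr (LinearEquiv.refl k _) (e1 (k := k) (V := V)).symm).trans
        (tpMul k V p 1))).reindex (snocE p)

lemma tb_apply (b : Module.Basis ι k V) : ∀ (p : ℕ) (w : Fin p → ι),
    tb b p w = tprod k (fun a => b (w a))
  | 0, w => by
    rw [tb, Module.Basis.map_apply, Module.Basis.singleton_apply, LinearEquiv.symm_apply_eq,
      PiTensorProduct.isEmptyEquiv_apply_tprod]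
  | (p + 1), w => by
    rw [tb, Module.Basis.reindex_apply, Module.Basis.map_apply]
    have : (snocE p).symm w = (Fin.init w, w (Fin.last p)) := rfl
    rw [this, Module.Basis.tensorProduct_apply, LinearEquiv.trans_apply, TensorProduct.congr_tmul,
      LinearEquiv.refl_apply, e1_symm, tb_apply b p, tpMul_tprod]
    congr 1
    rw [Fin.append_right_eq_snoc]
    show Fin.snoc (b ∘ Fin.init w) (b (w (Fin.last p))) = fun a => b (w a)
    rw [← Fin.comp_snoc, Fin.snoc_init_self]
    rfl

variable (b : Module.Basis ι k V) {p : ℕ}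

/-- The coordinate functionals on the tensor power. -/
noncomputable def Cw (w : Fin p → ι) : (⨂[k]^p V) →ₗ[k] k :=
  PiTensorProduct.lift
    ((MultilinearMap.mkPiAlgebra k (Fin p) k).compLinearMap (fun a => b.coord (w a)))

lemma Cw_tprod (w : Fin p → ι) (f : Fin p → V) :
    Cw b w (tprod k f) = ∏ a, b.repr (f a) (w a) := by
  simp [Cw, Module.Basis.coord_apply]

lemma Cw_eq_coord (w : Fin p → ι) : Cw b w = (tb b p).coord w := by
  classical
  refine Module.Basis.ext (tb b p) fun w' => ?_
  rw [tb_apply, Cw_tprod, Module.Basis.coord_apply, ← tb_apply b p w', Module.Basis.repr_self,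
    Finsupp.single_apply]
  by_cases hww : w' = w
  · subst hww; simp
  · rw [if_neg hww]
    obtain ⟨a, ha⟩ := Function.ne_iff.1 hww
    refine Finset.prod_eq_zero (Finset.mem_univ a) ?_
    rw [Module.Basis.repr_self, Finsupp.single_apply, if_neg ha]

lemma repr_eq_Cw (w : Fin p → ι) (z : ⨂[k]^p V) : (tb b p).repr z w = Cw b w z := by
  rw [Cw_eq_coord]; rfl

end Module.Basis
section Conditions
open Equiv

variable {k : Type*} [Field k] {V : Type*} [AddCommGroup V] [Module k V]
variable {ι : Type*} (b : Module.Basis ι k V) {p i j : ℕ}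

lemma Cw_tprod_comp (s : Equiv.Perm (Fin p)) (hs : ∀ a, s (s a) = a)
    (w : Fin p → ι) (F : Fin p → V) :
    Cw b w (tprod k (F ∘ s)) = Cw b (w ∘ s) (tprod k F) := by
  rw [Cw_tprod, Cw_tprod]
  conv_rhs => rw [← Equiv.prod_comp s (fun a => b.repr (F a) ((w ∘ s) a))]
  refine Finset.prod_congr rfl fun a _ => ?_
  simp [hs]

lemma w_comp_swap_eq (h : i + 2 + j = p) (w : Fin p → ι)
    (hw : w (pos0 h) = w (pos1 h)) :
    w ∘ (swap (pos0 h) (pos1 h)) = w := by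
  funext a
  rcases eq_or_ne a (pos0 h) with rfl | h0
  · simp [swap_apply_left, hw]
  rcases eq_or_ne a (pos1 h) with rfl | h1
  · simp [swap_apply_right, hw]
  · simp [swap_apply_of_ne_of_ne h0 h1]

lemma cond_swap (h : i + 2 + j = p) {z : ⨂[k]^p V} (hz : z ∈ Usub (k := k) (V := V) h)
    (w : Fin p → ι) :
    Cw b (w ∘ (swap (pos0 h) (pos1 h))) z = - Cw b w z := by
  set s := swap (pos0 h) (pos1 h) with hsdef
  have hs : ∀ a, s (s a) = a := fun a => swap_apply_self _ _ a
  have key : z ∈ LinearMap.ker (Cw b w + Cw b (w ∘ s)) := by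
    refine Usub_le h _ (fun u x y v => ?_) hz
    rw [LinearMap.mem_ker, LinearMap.add_apply, map_sub, map_sub, catp_swap h u x y v,
      ← hsdef, Cw_tprod_comp b s hs w, Cw_tprod_comp b s hs (w ∘ s)]
    have : (w ∘ s) ∘ s = w := by funext a; simp [Function.comp, hs]
    rw [this]
    ring
  rw [LinearMap.mem_ker, LinearMap.add_apply] at key
  exact eq_neg_of_add_eq_zero_right key

lemma cond_diag (h : i + 2 + j = p) {z : ⨂[k]^p V} (hz : z ∈ Usub (k := k) (V := V) h)
    (w : Fin p → ι) (hw : w (pos0 h) = w (pos1 h)) :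
    Cw b w z = 0 := by
  set s := swap (pos0 h) (pos1 h) with hsdef
  have hs : ∀ a, s (s a) = a := fun a => swap_apply_self _ _ a
  have key : z ∈ LinearMap.ker (Cw b w) := by
    refine Usub_le h _ (fun u x y v => ?_) hz
    rw [LinearMap.mem_ker, map_sub, catp_swap h u x y v, ← hsdef,
      Cw_tprod_comp b s hs w, w_comp_swap_eq h w hw, sub_self]
  exact key

end Conditions
section Global
open Equiv

variable {k : Type*} [Field k] {V : Type*} [AddCommGroup V] [Module k V]
variable {ι : Type*} (b : Module.Basis ι k V) {p : ℕ}

lemma mem_Usub_of_mem_W {z : ⨂[k]^p V} (hz : z ∈ W (Rsym k V) p) {i j : ℕ}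
    (h : i + 2 + j = p) : z ∈ Usub (k := k) (V := V) h := by
  rw [W_Rsym_eq] at hz
  simp only [Submodule.mem_iInf] at hz
  exact hz i j h

lemma antisym {z : ⨂[k]^p V} (hz : z ∈ W (Rsym k V) p)
    (σ : Equiv.Perm (Fin p)) (w : Fin p → ι) :
    Cw b (w ∘ σ) z = ((Equiv.Perm.sign σ : ℤ) : k) * Cw b w z := by
  rcases Nat.eq_zero_or_pos p with rfl | hp
  · -- p = 0 : the only permutation is 1
    have : σ = 1 := Subsingleton.elim _ _
    subst this
    simp [Function.comp]
  obtain ⟨n, rfl⟩ : ∃ n, p = n + 1 := ⟨p - 1, by omega⟩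
  have hσ : σ ∈ Submonoid.closure
      (Set.range fun i : Fin n => swap i.castSucc i.succ) := by
    rw [Equiv.Perm.mclosure_swap_castSucc_succ]
    exact Submonoid.mem_top σ
  induction hσ using Submonoid.closure_induction generalizing w with
  | mem x hx =>
    obtain ⟨a, rfl⟩ := hx
    have h : (a : ℕ) + 2 + (n + 1 - ((a : ℕ) + 2)) = n + 1 := by omega
    have h0 : pos0 h = a.castSucc := by ext; rfl
    have h1 : pos1 h = a.succ := by ext; rfl
    have := cond_swap b h (mem_Usub_of_mem_W hz h) w
    rw [h0, h1] at this
    rw [this, Equiv.Perm.sign_swap (Fin.castSucc_lt_succ (i := a)).ne]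
    push_cast
    ring
  | one =>
    simp [Function.comp]
  | mul x y hx hy ihx ihy =>
    have hcomp : w ∘ (x * y) = (w ∘ x) ∘ y := by
      funext a; rfl
    rw [hcomp, ihy (w ∘ x), ihx w, Equiv.Perm.sign_mul]
    push_cast
    ring

lemma vanish {z : ⨂[k]^p V} (hz : z ∈ W (Rsym k V) p) (hp : 2 ≤ p)
    (w : Fin p → ι) (hw : ¬ Function.Injective w) : Cw b w z = 0 := by
  obtain ⟨a, a', hww, hne⟩ := Function.not_injective_iff.1 hw
  have h0 : 0 + 2 + (p - 2) = p := by omega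
  set q0 : Fin p := pos0 h0 with hq0
  set q1 : Fin p := pos1 h0 with hq1
  have hq01 : q0 ≠ q1 := by simp [hq0, hq1, pos0, pos1, Fin.ext_iff]
  set c : Equiv.Perm (Fin p) := swap q0 a with hc
  have hb2 : c a' ≠ q0 := by
    intro hcon
    apply hne
    have : c (c a') = c q0 := by rw [hcon]
    rw [swap_apply_self, hc, swap_apply_left] at this
    exact this.symm
  set σ : Equiv.Perm (Fin p) := c * swap q1 (c a') with hσ
  have hσ0 : σ q0 = a := by
    rw [hσ, Equiv.Perm.mul_apply, swap_apply_of_ne_of_ne hq01 (Ne.symm hb2), hc,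
      swap_apply_left]
  have hσ1 : σ q1 = a' := by
    rw [hσ, Equiv.Perm.mul_apply, swap_apply_left, swap_apply_self]
  have hdiag : (w ∘ σ) (pos0 h0) = (w ∘ σ) (pos1 h0) := by
    simp only [Function.comp_apply, ← hq0, ← hq1, hσ0, hσ1, hww]
  have h1 : Cw b (w ∘ σ) z = 0 :=
    cond_diag b h0 (mem_Usub_of_mem_W hz h0) (w ∘ σ) hdiag
  have h2 := antisym b hz σ w
  rw [h1] at h2
  rcases Int.units_eq_one_or (Equiv.Perm.sign σ) with hs | hs <;> rw [hs] at h2 <;>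
    simpa using h2.symm

end Global
section Reconstruct
open Equiv

variable {k : Type*} [Field k] {V : Type*} [AddCommGroup V] [Module k V]
variable {ι : Type*} (b : Module.Basis ι k V) {p : ℕ}

lemma Cw_reindex (σ : Equiv.Perm (Fin p)) (w : Fin p → ι) (z : ⨂[k]^p V) :
    Cw b w (PiTensorProduct.reindex k (fun _ : Fin p => V) σ z) = Cw b (w ∘ σ) z := by
  have key : (Cw b w) ∘ₗ (PiTensorProduct.reindex k (fun _ : Fin p => V) σ).toLinearMap
      = Cw b (w ∘ σ) := by
    refine Module.Basis.ext (tb b p) fun w' => ?_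
    rw [tb_apply]
    simp only [LinearMap.coe_comp, Function.comp_apply, LinearEquiv.coe_coe]
    rw [PiTensorProduct.reindex_tprod, Cw_tprod, Cw_tprod]
    conv_lhs => rw [← Equiv.prod_comp σ
      (fun a => b.repr ((fun a' => b (w' a')) ((σ.symm : Fin p → Fin p) a)) (w a))]
    refine Finset.prod_congr rfl fun a _ => ?_
    simp
  have := LinearMap.congr_fun key z
  simpa using this

lemma repr_reindex (σ : Equiv.Perm (Fin p)) (w : Fin p → ι) (z : ⨂[k]^p V) :
    (tb b p).repr (PiTensorProduct.reindex k (fun _ : Fin p => V) σ z) w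
      = (tb b p).repr z (w ∘ σ) := by
  rw [repr_eq_Cw, repr_eq_Cw, Cw_reindex]

lemma repr_Ant (w : Fin p → ι) (z : ⨂[k]^p V) :
    (tb b p).repr (Ant k V p z) w
      = ∑ σ : Equiv.Perm (Fin p),
          ((Equiv.Perm.sign σ : ℤ) : k) * (tb b p).repr z (w ∘ σ) := by
  rw [Ant, LinearMap.sum_apply, map_sum, Finsupp.finset_sum_apply]
  refine Finset.sum_congr rfl fun σ _ => ?_
  rw [LinearMap.smul_apply, map_smul, Finsupp.smul_apply, smul_eq_mul, LinearEquiv.coe_coe,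
    repr_reindex]

lemma strictMono_unique {w : Fin p → ι} [LinearOrder ι] (hinj : Function.Injective w)
    (σ τ : Equiv.Perm (Fin p)) (hσ : StrictMono (w ∘ σ)) (hτ : StrictMono (w ∘ τ)) :
    σ = τ := by
  classical
  have hcard : (Finset.univ.image w).card = p := by
    rw [Finset.card_image_of_injective _ hinj, Finset.card_univ, Fintype.card_fin]
  have hmem : ∀ (ρ : Equiv.Perm (Fin p)) (x : Fin p), (w ∘ ρ) x ∈ Finset.univ.image w :=
    fun ρ x => Finset.mem_image.2 ⟨ρ x, Finset.mem_univ _, rfl⟩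
  have h1 := Finset.orderEmbOfFin_unique hcard (hmem σ) hσ
  have h2 := Finset.orderEmbOfFin_unique hcard (hmem τ) hτ
  refine Equiv.ext fun a => hinj ?_
  have := congrFun (h1.trans h2.symm) a
  exact this

end Reconstruct
section MainIncl
open Equiv

variable {k : Type*} [Field k] {V : Type*} [AddCommGroup V] [Module k V]
variable {ι : Type*} (b : Module.Basis ι k V) {p : ℕ}

include b in
lemma W_le_range [LinearOrder ι] (hp : 2 ≤ p) :
    W (Rsym k V) p ≤ LinearMap.range (Ant k V p) := by
  classical
  intro z hz
  set c := (tb b p).repr z with hcdef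
  set S := c.support.filter (fun w => StrictMono w) with hS
  set y : ⨂[k]^p V := ∑ w ∈ S, c w • tb b p w with hy
  have repr_y : ∀ w, (tb b p).repr y w = if StrictMono w then c w else 0 := by
    intro w
    rw [hy, map_sum]
    have hterm : ∀ w' ∈ S, (tb b p).repr (c w' • tb b p w') = Finsupp.single w' (c w') := by
      intro w' _
      rw [map_smul, Module.Basis.repr_self, Finsupp.smul_single, smul_eq_mul, mul_one]
    rw [Finset.sum_congr rfl hterm, Finsupp.finset_sum_apply]
    simp_rw [Finsupp.single_apply]
    rw [Finset.sum_ite_eq' S w (fun w' => c w')]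
    by_cases hsm : StrictMono w
    · by_cases hsupp : w ∈ c.support
      · rw [if_pos (Finset.mem_filter.2 ⟨hsupp, hsm⟩), if_pos hsm]
      · rw [if_pos hsm, if_neg (fun hcon => hsupp (Finset.mem_filter.1 hcon).1)]
        exact (Finsupp.notMem_support_iff.1 hsupp).symm
    · rw [if_neg hsm, if_neg (fun hcon => hsm (Finset.mem_filter.1 hcon).2)]
  refine ⟨y, ?_⟩
  apply (tb b p).repr.injective
  ext w
  rw [repr_Ant]
  simp_rw [repr_y]
  by_cases hinj : Function.Injective w
  · set σ₀ := Tuple.sort w with hσ₀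
    have hsm : StrictMono (w ∘ σ₀) :=
      (Tuple.monotone_sort w).strictMono_of_injective (hinj.comp σ₀.injective)
    rw [Finset.sum_eq_single_of_mem σ₀ (Finset.mem_univ _) ?_]
    · rw [if_pos hsm]
      have ha : Cw b (w ∘ σ₀) z = ((Equiv.Perm.sign σ₀ : ℤ) : k) * Cw b w z :=
        antisym b hz σ₀ w
      rw [hcdef, repr_eq_Cw, repr_eq_Cw, ha, ← mul_assoc]
      rcases Int.units_eq_one_or (Equiv.Perm.sign σ₀) with hs | hs <;> rw [hs] <;> norm_num
    · intro σ _ hσne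
      by_cases hsm' : StrictMono (w ∘ σ)
      · exact absurd (strictMono_unique hinj σ σ₀ hsm' hsm) hσne
      · rw [if_neg hsm', mul_zero]
  · have hno : ∀ σ : Equiv.Perm (Fin p), ¬ StrictMono (w ∘ σ) := by
      intro σ hsm
      apply hinj
      have hcinj : Function.Injective (w ∘ σ) := hsm.injective
      have : w = (w ∘ σ) ∘ σ.symm := by
        funext a; simp
      rw [this]
      exact hcinj.comp σ.symm.injective
    rw [Finset.sum_eq_zero fun σ _ => by rw [if_neg (hno σ), mul_zero]]
    rw [repr_eq_Cw]
    exact (vanish b hz hp w hinj).symm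

end MainIncl
section RangeLe
open Equiv

variable {k : Type*} [Field k] {V : Type*} [AddCommGroup V] [Module k V] {p i j : ℕ}

lemma tprod_sub_swap_mem (h : i + 2 + j = p) (g : Fin p → V) :
    tprod k g - tprod k (g ∘ (swap (pos0 h) (pos1 h))) ∈ Usub (k := k) (V := V) h := by
  have h1 := mem_Usub (k := k) (V := V) h (fun a => g ⟨a, by omega⟩) (g (pos0 h)) (g (pos1 h))
    (fun a => g ⟨i + 2 + a, by omega⟩)
  rwa [catp_swap h _ (g (pos0 h)) (g (pos1 h)) _, catp_eq_self h g] at h1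

lemma Ant_tprod_mem (h : i + 2 + j = p) (f : Fin p → V) :
    Ant k V p (tprod k f) ∈ Usub (k := k) (V := V) h := by
  classical
  set s : Equiv.Perm (Fin p) := swap (pos0 h) (pos1 h) with hs
  have hpos : pos0 h ≠ pos1 h := by simp [pos0, pos1, Fin.ext_iff]
  have hAnt : Ant k V p (tprod k f) = ∑ σ : Equiv.Perm (Fin p),
      ((Equiv.Perm.sign σ : ℤ) : k) • tprod k (fun a => f (σ.symm a)) := by
    rw [Ant, LinearMap.sum_apply]
    refine Finset.sum_congr rfl fun σ _ => ?_
    rw [LinearMap.smul_apply, LinearEquiv.coe_coe, PiTensorProduct.reindex_tprod]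
  set F : Equiv.Perm (Fin p) → ⨂[k]^p V :=
    fun σ => ((Equiv.Perm.sign σ : ℤ) : k) • tprod k (fun a => f (σ.symm a)) with hF
  set C : Equiv.Perm (Fin p) → Prop := fun σ => σ.symm (pos0 h) < σ.symm (pos1 h) with hC
  have hswap : ∀ σ : Equiv.Perm (Fin p), ∀ a, (s * σ).symm a = σ.symm (s a) := by
    intro σ a
    rw [Equiv.symm_apply_eq]
    show a = s (σ (σ.symm (s a)))
    rw [Equiv.apply_symm_apply, hs, swap_apply_self]
  have hmulC : ∀ σ, (s * σ).symm (pos0 h) = σ.symm (pos1 h)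
      ∧ (s * σ).symm (pos1 h) = σ.symm (pos0 h) := by
    intro σ
    constructor
    · rw [hswap σ, hs, swap_apply_left]
    · rw [hswap σ, hs, swap_apply_right]
  have hC_ne : ∀ σ : Equiv.Perm (Fin p), σ.symm (pos0 h) ≠ σ.symm (pos1 h) :=
    fun σ hcon => hpos (σ.symm.injective hcon)
  rw [hAnt, ← Finset.sum_filter_add_sum_filter_not Finset.univ C F]
  have heq : ∑ σ ∈ Finset.univ.filter (fun σ => ¬ C σ), F σ
      = ∑ σ ∈ Finset.univ.filter C, F (s * σ) := by
    refine (Finset.sum_nbij' (fun σ => s * σ) (fun σ => s * σ) ?_ ?_ ?_ ?_ ?_)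
    · intro σ hσ
      simp only [Finset.mem_filter, Finset.mem_univ, true_and, hC] at *
      rw [(hmulC σ).1, (hmulC σ).2]
      rcases lt_or_gt_of_ne (hC_ne σ) with h' | h'
      · exact absurd h' hσ
      · exact h'
    · intro σ hσ
      simp only [Finset.mem_filter, Finset.mem_univ, true_and, hC] at *
      rw [(hmulC σ).1, (hmulC σ).2]
      exact not_lt_of_gt hσ
    · intro σ _
      show s * (s * σ) = σ
      rw [← mul_assoc, hs, swap_mul_self, one_mul]
    · intro σ _
      show s * (s * σ) = σ
      rw [← mul_assoc, hs, swap_mul_self, one_mul]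
    · intro σ _
      show F σ = F (s * (s * σ))
      rw [← mul_assoc, hs, swap_mul_self, one_mul]
  rw [heq, ← Finset.sum_add_distrib]
  refine Submodule.sum_mem _ fun σ _ => ?_
  set g : Fin p → V := fun a => f (σ.symm a) with hg
  have hkey : F σ + F (s * σ)
      = ((Equiv.Perm.sign σ : ℤ) : k) • (tprod k g - tprod k (g ∘ s)) := by
    have h1 : (fun a => f ((s * σ).symm a)) = g ∘ s := by
      funext a
      rw [hswap σ a]
      rfl
    rw [hF]
    simp only [h1]
    rw [Equiv.Perm.sign_mul, hs, Equiv.Perm.sign_swap hpos]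
    push_cast
    rw [smul_sub]
    module
  rw [hkey, hs]
  exact Submodule.smul_mem _ _ (tprod_sub_swap_mem h g)

lemma range_Ant_le : LinearMap.range (Ant k V p) ≤ W (Rsym k V) p := by
  rw [W_Rsym_eq]
  refine le_iInf fun i => le_iInf fun j => le_iInf fun h => ?_
  rintro _ ⟨x, rfl⟩
  have hle : (⊤ : Submodule k (⨂[k]^p V)) ≤
      Submodule.comap (Ant k V p) (Usub (k := k) (V := V) h) := by
    rw [← PiTensorProduct.span_tprod_eq_top, Submodule.span_le]
    rintro _ ⟨f, rfl⟩
    exact Ant_tprod_mem h f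
  exact hle Submodule.mem_top

end RangeLe

/-- `W_p` is the image of the antisymmetrization map, for the symmetric algebra. -/
theorem W_symmetricAlgebra_eq_range_Ant (p : ℕ) :
    W (Rsym k V) p = LinearMap.range (Ant k V p) := by
  rcases le_or_gt 2 p with hp | hp
  · letI : LinearOrder (Module.Basis.ofVectorSpaceIndex k V) :=
      IsWellOrder.linearOrder WellOrderingRel
    exact le_antisymm (W_le_range (Module.Basis.ofVectorSpace k V) hp) range_Ant_le
  · have hW : W (Rsym k V) p = ⊤ := by
      rw [W_Rsym_eq, eq_top_iff]
      exact le_iInf fun i => le_iInf fun j => le_iInf fun h => absurd h (by omega)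
    have hsub : ∀ σ : Equiv.Perm (Fin p), σ = 1 := by
      intro σ
      refine Equiv.ext fun a => ?_
      have h1 := a.isLt
      have h2 := (σ a).isLt
      rw [Equiv.Perm.one_apply]
      rw [Fin.ext_iff]
      omega
    have huniv : (Finset.univ : Finset (Equiv.Perm (Fin p))) = {1} :=
      Finset.eq_singleton_iff_unique_mem.2 ⟨Finset.mem_univ _, fun x _ => hsub x⟩
    have hAnt : Ant k V p = LinearMap.id := by
      rw [Ant, huniv, Finset.sum_singleton]
      have h1 : (1 : Equiv.Perm (Fin p)) = Equiv.refl (Fin p) := rfl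
      rw [Equiv.Perm.sign_one, h1, PiTensorProduct.reindex_refl]
      simp
    rw [hW, hAnt, LinearMap.range_id]
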